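/- Let d be the F_2[v_0]-linear differential on the free F_2[v_0]-module with basis the admissible monomials R^{a_1}\cdots R^{a_m} y_1 (a_i \geq 2a_{i+1}, a_m \geq 4) not ending in R^5, R^9R^4, R^{17}R^8R^4, ..., defined by d(v_0^k R^{a_1}\cdots R^{a_m} y_1) = 0 if a_1 is odd and = v_0^{k+1} R^{a_1+1} R^{a_2} \cdots R^{a_m} y_1 if a_1 is even. Then d^2 = 0, and the homology is: (i) F_2 summands (annihilated by v_0) for each basis monomial with a_1 odd, and (ii) free F_2[v_0] summands for each of y_1, R^4 y_1, R^8 R^4 y_1, R^{16} R^8 R^4 y_1, .... -/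

import Mathlib

open scoped Classical

noncomputable section

/-- The base ring `F₂[v₀]`, with `v₀ = X`. -/
abbrev Pv : Type := Polynomial (ZMod 2)

/-- A monomial `R^{a_1} ⋯ R^{a_m} y₁`, recorded as the list `[a_1, …, a_m]`, is
admissible if `a_i ≥ 2 a_{i+1}` and `a_m ≥ 4`. -/
def AdmissibleY1 (l : List ℤ) : Prop :=
  l.Chain' (fun x y => 2 * y ≤ x) ∧ ∀ x : ℤ, l.getLast? = some x → 4 ≤ x

/-- The `k`-th forbidden ending `(2^k+1, 2^{k-1}, …, 8, 4)` for `k ≥ 2`: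
`(5)`, `(9,4)`, `(17,8,4)`, `(33,16,8,4)`, …. -/
def forbSeq (k : ℕ) : List ℤ :=
  ((2 : ℤ) ^ k + 1) :: (List.range (k - 2)).map fun j => (2 : ℤ) ^ (k - 1 - j)

/-- A monomial ends in a forbidden sequence. -/
def HasForbiddenEnding (l : List ℤ) : Prop :=
  ∃ k : ℕ, 2 ≤ k ∧ (forbSeq k).IsSuffix l

/-- The allowed basis monomials: admissible, not ending in a forbidden sequence. -/
def AllowedY1 (l : List ℤ) : Prop := AdmissibleY1 l ∧ ¬ HasForbiddenEnding l

/-- The index set of allowed basis monomials `R^{a_1} ⋯ R^{a_m} y₁`. -/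
abbrev AllowedIdx := {l : List ℤ // AllowedY1 l}

/-- The free `F₂[v₀]`-module on the allowed basis monomials. -/
abbrev Vmod : Type := AllowedIdx →₀ Pv

/-- The value of the differential on a basis monomial: `0` if `a_1` is odd (or
the monomial is `y₁` itself), and `v₀ · R^{a_1+1} R^{a_2} ⋯ R^{a_m} y₁` if
`a_1` is even (the target being `0` when `R^{a_1+1} ⋯` has a forbidden ending). -/
def dBasis : AllowedIdx → Vmod
  | ⟨[], _⟩ => 0
  | ⟨a :: t, _⟩ =>
      if Odd a then 0
      else if h : AllowedY1 ((a + 1) :: t) then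
        (Polynomial.X : Pv) • Finsupp.single (⟨(a + 1) :: t, h⟩ : AllowedIdx) (1 : Pv)
      else 0

/-- The `F₂[v₀]`-linear differential, so that
`d(v₀^k R^{a_1} ⋯ R^{a_m} y₁) = 0` if `a_1` is odd and
`= v₀^{k+1} R^{a_1+1} R^{a_2} ⋯ R^{a_m} y₁` if `a_1` is even. -/
def dMap : Vmod →ₗ[Pv] Vmod :=
  Finsupp.lsum Pv fun s => LinearMap.toSpanSingleton Pv Vmod (dBasis s)

/-- The `m`-th tower generator `[2^{m+1}, …, 8, 4]`: `y₁`, `R^4 y₁`,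
`R^8 R^4 y₁`, `R^{16} R^8 R^4 y₁`, …. -/
def towerList (m : ℕ) : List ℤ := (List.range m).map fun j => (2 : ℤ) ^ (m + 1 - j)

/-! ### Auxiliary development -/

abbrev OddP (s : AllowedIdx) : Prop := ∃ (a : ℤ) (t : List ℤ), s.1 = a :: t ∧ Odd a
abbrev TowP (s : AllowedIdx) : Prop := ∃ m : ℕ, s.1 = towerList m

lemma towerList_zero : towerList 0 = [] := by simp [towerList]

lemma towerList_succ (m : ℕ) :
    towerList (m + 1) =
      (2 : ℤ) ^ (m + 2) :: (List.range m).map (fun j => (2 : ℤ) ^ (m + 1 - j)) := by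
  unfold towerList
  rw [List.range_succ_eq_map, List.map_cons, List.map_map]
  congr 1
  apply List.map_congr_left
  intro j hj
  simp only [Function.comp]
  congr 1
  omega

lemma forbSeq_eq (m : ℕ) :
    forbSeq (m + 2) =
      ((2 : ℤ) ^ (m + 2) + 1) :: (List.range m).map (fun j => (2 : ℤ) ^ (m + 1 - j)) := by
  unfold forbSeq
  have h1 : m + 2 - 2 = m := by omega
  rw [h1]
  have h2 : (fun j => (2:ℤ) ^ (m + 2 - 1 - j)) = (fun j : ℕ => (2:ℤ) ^ (m + 1 - j)) := by
    funext j
    congr 1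
  rw [h2]

lemma even_two_pow (n : ℕ) (hn : 1 ≤ n) : ¬ Odd ((2:ℤ) ^ n) := by
  rw [Int.not_odd_iff_even]
  obtain ⟨k, rfl⟩ : ∃ k, n = k + 1 := ⟨n - 1, by omega⟩
  exact ⟨2 ^ k, by ring⟩

lemma tow_head_not_odd {m : ℕ} {a : ℤ} {t : List ℤ} (h : towerList m = a :: t) : ¬ Odd a := by
  cases m with
  | zero => simp [towerList_zero] at h
  | succ m =>
    rw [towerList_succ] at h
    obtain ⟨rfl, -⟩ := List.cons.injEq .. ▸ h
    · exact even_two_pow (m + 2) (by omega)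

lemma predList_allowed {b : ℤ} {t : List ℤ} (h : AllowedY1 (b :: t)) (hb : Odd b) :
    AllowedY1 ((b - 1) :: t) := by
  obtain ⟨⟨hch, hlast⟩, hforb⟩ := h
  obtain ⟨c, rfl⟩ := hb
  refine ⟨⟨?_, ?_⟩, ?_⟩
  · simp only [List.Chain', List.isChain_cons] at hch ⊢
    refine ⟨fun y hy => ?_, hch.2⟩
    have := hch.1 y hy
    omega
  · intro x hx
    cases t with
    | nil =>
      simp only [List.getLast?_singleton, Option.some.injEq] at hx
      have := hlast (2 * c + 1) (by simp)
      omega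
    | cons y t' =>
      rw [List.getLast?_cons_cons] at hx
      exact hlast x (by rwa [List.getLast?_cons_cons])
  · rintro ⟨k, hk, hsuf⟩
    rcases List.suffix_cons_iff.mp hsuf with heq | hsuf'
    · obtain ⟨m, rfl⟩ : ∃ m, k = m + 2 := ⟨k - 2, by omega⟩
      rw [forbSeq_eq] at heq
      obtain ⟨h1, -⟩ := List.cons.injEq .. ▸ heq
      have : ¬ Odd ((2:ℤ) ^ (m + 2)) := even_two_pow _ (by omega)
      rw [Int.not_odd_iff_even] at this
      obtain ⟨e, he⟩ := this
      omega
    · exact hforb ⟨k, hk, hsuf'.trans (List.suffix_cons _ _)⟩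

lemma succList_admissible {a : ℤ} {t : List ℤ} (h : AllowedY1 (a :: t)) :
    AdmissibleY1 ((a + 1) :: t) := by
  obtain ⟨⟨hch, hlast⟩, -⟩ := h
  refine ⟨?_, ?_⟩
  · simp only [List.Chain', List.isChain_cons] at hch ⊢
    refine ⟨fun y hy => ?_, hch.2⟩
    have := hch.1 y hy
    omega
  · intro x hx
    cases t with
    | nil =>
      simp only [List.getLast?_singleton, Option.some.injEq] at hx
      have := hlast a (by simp)
      omega
    | cons y t' =>
      rw [List.getLast?_cons_cons] at hx
      exact hlast x (by rwa [List.getLast?_cons_cons])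

lemma succList_forb {a : ℤ} {t : List ℤ} (h : AllowedY1 (a :: t))
    (hf : HasForbiddenEnding ((a + 1) :: t)) : ∃ m : ℕ, a :: t = towerList (m + 1) := by
  obtain ⟨k, hk, hsuf⟩ := hf
  rcases List.suffix_cons_iff.mp hsuf with heq | hsuf'
  · obtain ⟨m, rfl⟩ : ∃ m, k = m + 2 := ⟨k - 2, by omega⟩
    rw [forbSeq_eq] at heq
    obtain ⟨h1, h2⟩ := List.cons.injEq .. ▸ heq
    refine ⟨m, ?_⟩
    rw [towerList_succ, ← h2]
    congr 1
    omega
  · exact absurd ⟨k, hk, hsuf'.trans (List.suffix_cons _ _)⟩ h.2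

lemma tower_dead {m : ℕ} {a : ℤ} {t : List ℤ} (h : a :: t = towerList (m + 1)) :
    ¬ AllowedY1 ((a + 1) :: t) := by
  rw [towerList_succ] at h
  obtain ⟨rfl, rfl⟩ := List.cons.injEq .. ▸ h
  intro hall
  exact hall.2 ⟨m + 2, by omega, by rw [forbSeq_eq]⟩

/-- Decrement the head of a list. -/
def predList : List ℤ → List ℤ
  | [] => []
  | a :: t => (a - 1) :: t

/-- The predecessor of an odd-headed allowed index. -/
def predIdx (s : AllowedIdx) (hs : OddP s) : AllowedIdx :=
  ⟨predList s.1, by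
    obtain ⟨a, t, h1, h2⟩ := hs
    rw [h1]
    exact predList_allowed (h1 ▸ s.2) h2⟩

lemma predIdx_val {s : AllowedIdx} {b : ℤ} {t : List ℤ} (hbt : s.1 = b :: t) (hb : Odd b)
    (hs : OddP s) : (predIdx s hs).1 = (b - 1) :: t := by
  show predList s.1 = _
  rw [hbt]
  rfl

lemma predIdx_not_odd (s : AllowedIdx) (hs : OddP s) : ¬ OddP (predIdx s hs) := by
  obtain ⟨b, t, hbt, hb⟩ := hs
  rintro ⟨a, t', hat, ha⟩
  rw [predIdx_val hbt hb] at hat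
  obtain ⟨h2, -⟩ := List.cons.injEq .. ▸ hat
  obtain ⟨c, rfl⟩ := hb
  obtain ⟨d, hd⟩ := ha
  omega

lemma predIdx_not_tow (s : AllowedIdx) (hs : OddP s) : ¬ TowP (predIdx s hs) := by
  obtain ⟨b, t, hbt, hb⟩ := hs
  rintro ⟨m, hm⟩
  rw [predIdx_val hbt hb] at hm
  cases m with
  | zero => simp [towerList_zero] at hm
  | succ m =>
    have hdead := tower_dead hm
    have : b - 1 + 1 = b := by ring
    rw [this, ← hbt] at hdead
    exact hdead s.2

/-- Value of `dBasis s` at an odd-headed index `u`. -/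
lemma dBasis_apply_odd (s u : AllowedIdx) (hu : OddP u) :
    (dBasis s) u = if s = predIdx u hu then (Polynomial.X : Pv) else 0 := by
  obtain ⟨b, t', hbt, hb⟩ := id hu
  have hpv : (predIdx u hu).1 = (b - 1) :: t' := predIdx_val hbt hb hu
  obtain ⟨l, hl⟩ := s
  match l, hl with
  | [], hl =>
    rw [if_neg]
    · rfl
    · intro h
      have : ([] : List ℤ) = (b - 1) :: t' := by
        rw [← hpv, ← h]
      simp at this
  | a :: t, hl =>
    by_cases ha : Odd a
    · rw [show dBasis ⟨a :: t, hl⟩ = 0 by simp [dBasis, ha], if_neg]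
      · rfl
      · intro h
        have : a :: t = (b - 1) :: t' := by
          rw [← hpv, ← h]
        obtain ⟨h2, -⟩ := List.cons.injEq .. ▸ this
        obtain ⟨c, rfl⟩ := hb
        obtain ⟨d, hd⟩ := ha
        omega
    · by_cases htgt : AllowedY1 ((a + 1) :: t)
      · rw [show dBasis ⟨a :: t, hl⟩
            = (Polynomial.X : Pv) • Finsupp.single (⟨(a + 1) :: t, htgt⟩ : AllowedIdx) (1 : Pv)
            by simp [dBasis, ha, htgt]]
        rw [Finsupp.smul_apply, Finsupp.single_apply]
        by_cases he : (⟨(a + 1) :: t, htgt⟩ : AllowedIdx) = u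
        · rw [if_pos he, if_pos, smul_eq_mul, mul_one]
          apply Subtype.ext
          show a :: t = (predIdx u hu).1
          rw [hpv]
          have h1 : (a + 1) :: t = b :: t' := by
            rw [← hbt, ← he]
          obtain ⟨h2, h3⟩ := List.cons.injEq .. ▸ h1
          rw [List.cons.injEq]
          exact ⟨by omega, h3⟩
        · rw [if_neg he, if_neg, smul_zero]
          intro h
          apply he
          apply Subtype.ext
          show (a + 1) :: t = u.1
          have h1 : a :: t = (b - 1) :: t' := by
            rw [← hpv, ← h]
          obtain ⟨h2, h3⟩ := List.cons.injEq .. ▸ h1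
          rw [hbt, List.cons.injEq]
          exact ⟨by omega, h3⟩
      · rw [show dBasis ⟨a :: t, hl⟩ = 0 by simp [dBasis, ha, htgt], if_neg]
        · rfl
        · intro h
          have h1 : a :: t = (b - 1) :: t' := by
            rw [← hpv, ← h]
          obtain ⟨h2, h3⟩ := List.cons.injEq .. ▸ h1
          apply htgt
          have : (a + 1) :: t = b :: t' := by
            rw [List.cons.injEq]
            exact ⟨by omega, h3⟩
          rw [this, ← hbt]
          exact u.2

lemma dBasis_apply_not_odd (s u : AllowedIdx) (hu : ¬ OddP u) : (dBasis s) u = 0 := by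
  obtain ⟨l, hl⟩ := s
  match l, hl with
  | [], hl => rfl
  | a :: t, hl =>
    by_cases ha : Odd a
    · rw [show dBasis ⟨a :: t, hl⟩ = 0 by simp [dBasis, ha]]; rfl
    · by_cases htgt : AllowedY1 ((a + 1) :: t)
      · rw [show dBasis ⟨a :: t, hl⟩
            = (Polynomial.X : Pv) • Finsupp.single (⟨(a + 1) :: t, htgt⟩ : AllowedIdx) (1 : Pv)
            by simp [dBasis, ha, htgt]]
        rw [Finsupp.smul_apply, Finsupp.single_apply, if_neg, smul_zero]
        intro h
        exact hu ⟨a + 1, t, by rw [← h], (Int.even_or_odd a).resolve_right ha |>.add_one⟩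
      · rw [show dBasis ⟨a :: t, hl⟩ = 0 by simp [dBasis, ha, htgt]]; rfl

lemma dMap_apply_odd (f : Vmod) (u : AllowedIdx) (hu : OddP u) :
    dMap f u = f (predIdx u hu) * Polynomial.X := by
  rw [dMap, Finsupp.lsum_apply, Finsupp.sum_apply]
  rw [Finsupp.sum]
  rw [Finset.sum_eq_single (predIdx u hu)]
  · rw [LinearMap.toSpanSingleton_apply, Finsupp.smul_apply, dBasis_apply_odd _ _ hu,
      if_pos rfl, smul_eq_mul]
  · intro s hs hne
    rw [LinearMap.toSpanSingleton_apply, Finsupp.smul_apply, dBasis_apply_odd _ _ hu,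
      if_neg hne, smul_zero]
  · intro h
    rw [Finsupp.notMem_support_iff.mp h]
    simp

lemma dMap_apply_not_odd (f : Vmod) (u : AllowedIdx) (hu : ¬ OddP u) : dMap f u = 0 := by
  rw [dMap, Finsupp.lsum_apply, Finsupp.sum_apply, Finsupp.sum]
  apply Finset.sum_eq_zero
  intro s hs
  rw [LinearMap.toSpanSingleton_apply, Finsupp.smul_apply, dBasis_apply_not_odd _ _ hu,
    smul_zero]

/-- Increment the head of a list. -/
def succList : List ℤ → List ℤ
  | [] => []
  | a :: t => (a + 1) :: t

lemma succIdx_allowed {s : AllowedIdx} (h1 : ¬ OddP s) (h2 : ¬ TowP s) :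
    AllowedY1 (succList s.1) := by
  obtain ⟨l, hl⟩ := s
  match l, hl with
  | [], hl => exact absurd ⟨0, towerList_zero.symm⟩ h2
  | a :: t, hl =>
    show AllowedY1 ((a + 1) :: t)
    refine ⟨succList_admissible hl, fun hf => ?_⟩
    obtain ⟨m, hm⟩ := succList_forb hl hf
    exact h2 ⟨m + 1, hm⟩

/-- The successor of a live index. -/
def succIdx (s : AllowedIdx) (h1 : ¬ OddP s) (h2 : ¬ TowP s) : AllowedIdx :=
  ⟨succList s.1, succIdx_allowed h1 h2⟩

lemma succIdx_odd (s : AllowedIdx) (h1 : ¬ OddP s) (h2 : ¬ TowP s) :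
    OddP (succIdx s h1 h2) := by
  obtain ⟨l, hl⟩ := s
  match l, hl with
  | [], hl => exact absurd ⟨0, towerList_zero.symm⟩ h2
  | a :: t, hl =>
    have ha : ¬ Odd a := fun ha => h1 ⟨a, t, rfl, ha⟩
    exact ⟨a + 1, t, rfl, ((Int.even_or_odd a).resolve_right ha).add_one⟩

lemma pred_succ (s : AllowedIdx) (h1 : ¬ OddP s) (h2 : ¬ TowP s)
    (h3 : OddP (succIdx s h1 h2)) : predIdx (succIdx s h1 h2) h3 = s := by
  apply Subtype.ext
  show predList (succList s.1) = s.1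
  obtain ⟨l, -⟩ := s
  cases l with
  | nil => rfl
  | cons a t =>
    show (a + 1 - 1) :: t = a :: t
    rw [List.cons.injEq]
    exact ⟨by ring, rfl⟩

lemma predIdx_injective {s u : AllowedIdx} (hs : OddP s) (hu : OddP u)
    (h : predIdx s hs = predIdx u hu) : s = u := by
  obtain ⟨a, t, hat, ha⟩ := id hs
  obtain ⟨b, t', hbt, hb⟩ := id hu
  have h1 : (a - 1) :: t = (b - 1) :: t' := by
    rw [← predIdx_val hat ha hs, ← predIdx_val hbt hb hu, h]
  obtain ⟨h2, h3⟩ := List.cons.injEq .. ▸ h1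
  apply Subtype.ext
  rw [hat, hbt, List.cons.injEq]
  exact ⟨by omega, h3⟩

lemma odd_not_tow {s : AllowedIdx} (h : OddP s) : ¬ TowP s := by
  rintro ⟨m, hm⟩
  obtain ⟨a, t, hat, ha⟩ := h
  exact tow_head_not_odd (hm.symm.trans hat) ha

lemma dMap_dMap (f : Vmod) : dMap (dMap f) = 0 := by
  refine Finsupp.ext fun u => ?_
  rw [Finsupp.coe_zero, Pi.zero_apply]
  by_cases hu : OddP u
  · rw [dMap_apply_odd _ _ hu, dMap_apply_not_odd _ _ (predIdx_not_odd u hu), zero_mul]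
  · exact dMap_apply_not_odd _ _ hu

lemma mem_ker_iff (f : Vmod) : dMap f = 0 ↔ ∀ s, ¬ OddP s → ¬ TowP s → f s = 0 := by
  constructor
  · intro h s h1 h2
    have h3 := succIdx_odd s h1 h2
    have h4 : dMap f (succIdx s h1 h2) = 0 := by rw [h]; rfl
    rw [dMap_apply_odd _ _ h3, pred_succ s h1 h2 h3] at h4
    exact (mul_eq_zero.mp h4).resolve_right Polynomial.X_ne_zero
  · intro h
    refine Finsupp.ext fun u => ?_
    rw [Finsupp.coe_zero, Pi.zero_apply]
    by_cases hu : OddP u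
    · rw [dMap_apply_odd _ _ hu, h _ (predIdx_not_odd u hu) (predIdx_not_tow u hu), zero_mul]
    · exact dMap_apply_not_odd _ _ hu

lemma exists_preimage (x : Vmod)
    (hDead : ∀ s, ¬ OddP s → ¬ TowP s → x s = 0)
    (hTow : ∀ s, TowP s → x s = 0)
    (hOdd : ∀ s, OddP s → (Polynomial.X : Pv) ∣ x s) :
    ∃ y : Vmod, dMap y = x := by
  refine ⟨x.sum (fun s p => if hs : OddP s then Finsupp.single (predIdx s hs) p.divX else 0), ?_⟩
  refine Finsupp.ext fun u => ?_
  by_cases hu : OddP u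
  · rw [dMap_apply_odd _ _ hu]
    rw [Finsupp.sum_apply, Finsupp.sum]
    rw [Finset.sum_eq_single u]
    · rw [dif_pos hu, Finsupp.single_apply, if_pos rfl]
      have hdvd := hOdd u hu
      have h0 : (x u).coeff 0 = 0 := Polynomial.X_dvd_iff.mp hdvd
      have := Polynomial.X_mul_divX_add (x u)
      rw [h0, map_zero, add_zero] at this
      rw [mul_comm] at this
      exact this
    · intro s hsupp hne
      by_cases hs : OddP s
      · rw [dif_pos hs, Finsupp.single_apply, if_neg]
        intro h
        exact hne (predIdx_injective hs hu h)
      · rw [dif_neg hs]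
        rfl
    · intro hnotin
      rw [dif_pos hu, Finsupp.single_apply, if_pos rfl]
      rw [Finsupp.notMem_support_iff.mp hnotin]
      simp
  · rw [dMap_apply_not_odd _ _ hu]
    by_cases ht : TowP u
    · rw [hTow u ht]
    · rw [hDead u hu ht]

/-- Restriction to odd-headed indices, as a linear map. -/
def lsubO : Vmod →ₗ[Pv]
    ({s : AllowedIdx // ∃ (a : ℤ) (t : List ℤ), s.1 = a :: t ∧ Odd a} →₀ Pv) where
  toFun := Finsupp.subtypeDomain _
  map_add' _ _ := Finsupp.subtypeDomain_add
  map_smul' _ _ := Finsupp.ext fun _ => rfl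

/-- Restriction to tower indices, as a linear map. -/
def lsubT : Vmod →ₗ[Pv] ({s : AllowedIdx // ∃ m : ℕ, s.1 = towerList m} →₀ Pv) where
  toFun := Finsupp.subtypeDomain _
  map_add' _ _ := Finsupp.subtypeDomain_add
  map_smul' _ _ := Finsupp.ext fun _ => rfl

/-- The comparison map realizing the homology. -/
def phi : LinearMap.ker dMap →ₗ[Pv]
    (({s : AllowedIdx // ∃ (a : ℤ) (t : List ℤ), s.1 = a :: t ∧ Odd a} →₀
        Pv ⧸ Ideal.span {Polynomial.X (R := ZMod 2)}) ×
      ({s : AllowedIdx // ∃ m : ℕ, s.1 = towerList m} →₀ Pv)) :=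
  LinearMap.prod
    (((Finsupp.mapRange.linearMap (Ideal.span {Polynomial.X (R := ZMod 2)}).mkQ).comp
        lsubO).comp (LinearMap.ker dMap).subtype)
    (lsubT.comp (LinearMap.ker dMap).subtype)

lemma phi_apply_fst (x : LinearMap.ker dMap)
    (u : {s : AllowedIdx // ∃ (a : ℤ) (t : List ℤ), s.1 = a :: t ∧ Odd a}) :
    (phi x).1 u = (Ideal.span {Polynomial.X (R := ZMod 2)}).mkQ ((x : Vmod) u.1) := rfl

lemma phi_apply_snd (x : LinearMap.ker dMap)
    (u : {s : AllowedIdx // ∃ m : ℕ, s.1 = towerList m}) :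
    (phi x).2 u = (x : Vmod) u.1 := rfl

lemma notin_range_subtype {p : AllowedIdx → Prop} {s : AllowedIdx} (hs : ¬ p s) :
    s ∉ Set.range ⇑(Function.Embedding.subtype p) := by
  rintro ⟨u, hu⟩
  rw [Function.Embedding.coe_subtype] at hu
  exact hs (hu ▸ u.2)

lemma embDomain_subtype_apply {p : AllowedIdx → Prop} (v : Subtype p →₀ Pv) {s : AllowedIdx}
    (hs : p s) : Finsupp.embDomain (Function.Embedding.subtype p) v s = v ⟨s, hs⟩ :=
  Finsupp.embDomain_apply_self (Function.Embedding.subtype p) v ⟨s, hs⟩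

lemma phi_surjective : Function.Surjective phi := by
  rintro ⟨g, h⟩
  obtain ⟨g', hg'⟩ := Finsupp.mapRange_surjective
    (⇑(Ideal.span {Polynomial.X (R := ZMod 2)}).mkQ) (map_zero _)
    (Submodule.mkQ_surjective _) g
  set f₀ : Vmod := Finsupp.embDomain (Function.Embedding.subtype _) g' +
      Finsupp.embDomain (Function.Embedding.subtype _) h with hf₀
  have hker : dMap f₀ = 0 := by
    rw [mem_ker_iff]
    intro s h1 h2
    rw [hf₀, Finsupp.add_apply,
      Finsupp.embDomain_notin_range _ _ _ (notin_range_subtype h1),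
      Finsupp.embDomain_notin_range _ _ _ (notin_range_subtype h2), add_zero]
  refine ⟨⟨f₀, LinearMap.mem_ker.mpr hker⟩, ?_⟩
  refine Prod.ext ?_ ?_
  · refine Finsupp.ext fun u => ?_
    rw [phi_apply_fst]
    have hv : f₀ u.1 = g' u := by
      rw [hf₀, Finsupp.add_apply, embDomain_subtype_apply g' u.2,
        Finsupp.embDomain_notin_range _ _ _ (notin_range_subtype (odd_not_tow u.2)), add_zero]
    rw [hv, ← hg', Finsupp.mapRange_apply]
  · refine Finsupp.ext fun u => ?_
    rw [phi_apply_snd]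
    have hnodd : ¬ OddP u.1 := fun ho => odd_not_tow ho u.2
    have hv : f₀ u.1 = h u := by
      rw [hf₀, Finsupp.add_apply,
        Finsupp.embDomain_notin_range _ _ _ (notin_range_subtype hnodd), zero_add,
        embDomain_subtype_apply h u.2]
    exact hv

lemma phi_ker : LinearMap.ker phi =
    (LinearMap.range dMap).comap (LinearMap.ker dMap).subtype := by
  ext x
  rw [LinearMap.mem_ker, Submodule.mem_comap, LinearMap.mem_range]
  constructor
  · intro h0
    have hx : dMap (x : Vmod) = 0 := x.2
    have hDead := (mem_ker_iff _).mp hx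
    have hTow : ∀ s, TowP s → (x : Vmod) s = 0 := by
      intro s hs
      have h2 : (phi x).2 ⟨s, hs⟩ = 0 := by rw [h0]; rfl
      rw [phi_apply_snd] at h2
      exact h2
    have hOdd : ∀ s, OddP s → (Polynomial.X : Pv) ∣ (x : Vmod) s := by
      intro s hs
      have h1 : (phi x).1 ⟨s, hs⟩ = 0 := by rw [h0]; rfl
      rw [phi_apply_fst, Submodule.mkQ_apply, Submodule.Quotient.mk_eq_zero] at h1
      exact Ideal.mem_span_singleton.mp h1
    obtain ⟨y, hy⟩ := exists_preimage _ hDead hTow hOdd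
    exact ⟨y, hy⟩
  · rintro ⟨y, hy⟩
    refine Prod.ext ?_ ?_
    · refine Finsupp.ext fun u => ?_
      rw [phi_apply_fst]
      have hv : (x : Vmod) u.1 = dMap y u.1 := by rw [hy]; rfl
      rw [hv, dMap_apply_odd _ _ u.2, Submodule.mkQ_apply]
      show Submodule.Quotient.mk _ = (0 : _)
      rw [Submodule.Quotient.mk_eq_zero]
      exact Ideal.mem_span_singleton.mpr (dvd_mul_left _ _)
    · refine Finsupp.ext fun u => ?_
      rw [phi_apply_snd]
      have hv : (x : Vmod) u.1 = dMap y u.1 := by rw [hy]; rfl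
      rw [hv, dMap_apply_not_odd _ _ (fun ho => odd_not_tow ho u.2)]
      rfl

/-- `d² = 0`, and the homology of `(Vmod, d)` is a direct sum of: `F₂`-summands
(copies of `F₂[v₀]/(v₀)`) indexed by the allowed basis monomials with `a_1` odd,
and free `F₂[v₀]`-summands indexed by the tower monomials `y₁`, `R^4 y₁`,
`R^8 R^4 y₁`, `R^{16} R^8 R^4 y₁`, …. -/
theorem stmt_12 :
    (∀ x : Vmod, dMap (dMap x) = 0) ∧
      ∃ φ : LinearMap.ker dMap →ₗ[Pv]
          (({s : AllowedIdx // ∃ (a : ℤ) (t : List ℤ), s.1 = a :: t ∧ Odd a} →₀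
              Pv ⧸ Ideal.span {Polynomial.X (R := ZMod 2)}) ×
            ({s : AllowedIdx // ∃ m : ℕ, s.1 = towerList m} →₀ Pv)),
        Function.Surjective φ ∧
          LinearMap.ker φ =
            (LinearMap.range dMap).comap (LinearMap.ker dMap).subtype := by
  exact ⟨dMap_dMap, phi, phi_surjective, phi_ker⟩

end
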